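/- Let m ≥ 1, let T be a non-self-overlapping m-bit template, and let M satisfy L := M−m+1 ≥ m. Let c be the occurrence count of T in a block B drawn uniformly at random from the 2^M equiprobable M-bit blocks. Then Var(c) = L/2^m − ((2m−1)L − m(m−1))/2^{2m}. -/

import Mathlib

open scoped Classical

/-- `T` occurs in the block `B` at position `k`: `B (k+i) = T i` for all `i < m`. -/
def occursAt {m M : ℕ} (T : Fin m → Bool) (B : Fin M → Bool) (k : ℕ) : Prop :=
  ∀ i : Fin m, ∀ h : k + i.1 < M, B ⟨k + i.1, h⟩ = T i

/-- The number of occurrences of the template `T` in the block `B`. -/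
noncomputable def occCount {m M : ℕ} (T : Fin m → Bool) (B : Fin M → Bool) : ℕ :=
  ((Finset.range (M + 1 - m)).filter (fun k => occursAt T B k)).card

/-- `T` is non-self-overlapping. -/
def NonSelfOverlapping {m : ℕ} (T : Fin m → Bool) : Prop :=
  ∀ k : ℕ, 1 ≤ k → k ≤ m - 1 → ∃ i : ℕ, ∃ h : i < m - k,
    T ⟨i, by omega⟩ ≠ T ⟨i + k, by omega⟩

/-- Expectation of `f` when the block is drawn uniformly from the `2^M` `M`-bit blocks. -/
noncomputable def unifExp (M : ℕ) (f : (Fin M → Bool) → ℝ) : ℝ :=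
  (∑ B : Fin M → Bool, f B) / 2 ^ M

namespace VarOcc
open Finset

lemma card_agree (M : ℕ) (s : Finset (Fin M)) (g : Fin M → Bool) :
    (univ.filter (fun B : Fin M → Bool => ∀ j ∈ s, B j = g j)).card = 2 ^ (M - s.card) := by
  have h1 : (univ.filter (fun B : Fin M → Bool => ∀ j ∈ s, B j = g j)).card
      = (univ : Finset ({j : Fin M // j ∉ s} → Bool)).card := by
    apply card_nbij' (i := fun B j => B j.1)
      (j := fun h x => if hx : x ∈ s then g x else h ⟨x, hx⟩)
    · intro a _; exact mem_univ _
    · intro h _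
      simp only [mem_coe, mem_filter, mem_univ, true_and]
      intro j hj; simp [hj]
    · intro B hB
      simp only [mem_coe, mem_filter, mem_univ, true_and] at hB
      funext x
      by_cases hx : x ∈ s
      · simp [hx, (hB x hx).symm]
      · simp [hx]
    · intro h _
      funext x
      simp [x.2]
  rw [h1, card_univ, Fintype.card_fun]
  simp [Fintype.card_subtype_compl, Fintype.card_subtype]
  rw [filter_not, filter_mem_eq_inter, univ_inter, card_sdiff_of_subset (subset_univ s)]
  simp

lemma card_window {M : ℕ} (k m : ℕ) (hk : k + m ≤ M) :
    (univ.filter (fun j : Fin M => k ≤ j.1 ∧ j.1 < k + m)).card = m := by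
  have : (univ.filter (fun j : Fin M => k ≤ j.1 ∧ j.1 < k + m)).card = (Finset.Ico k (k+m)).card := by
    apply card_bij (fun j _ => j.1)
    · intro a ha; simp only [mem_filter, mem_univ, true_and] at ha; simp [mem_Ico, ha]
    · intro a ha b hb hab; exact Fin.ext hab
    · intro b hb
      simp only [mem_Ico] at hb
      exact ⟨⟨b, by omega⟩, by simp [mem_filter, hb], rfl⟩
  rw [this, Nat.card_Ico]; omega

lemma count_single {m M : ℕ} (T : Fin m → Bool) (k : ℕ) (hk : k + m ≤ M) :
    (univ.filter (fun B : Fin M → Bool => occursAt T B k)).card = 2 ^ (M - m) := by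
  have heq : univ.filter (fun B : Fin M → Bool => occursAt T B k)
      = univ.filter (fun B : Fin M → Bool =>
          ∀ j ∈ univ.filter (fun j : Fin M => k ≤ j.1 ∧ j.1 < k + m), B j =
            (if h : k ≤ j.1 ∧ j.1 < k + m then T ⟨j.1 - k, by omega⟩ else false)) := by
    apply filter_congr
    intro B _
    constructor
    · intro hB j hj
      simp only [mem_filter, mem_univ, true_and] at hj
      rw [dif_pos hj]
      have e := hB ⟨j.1 - k, by omega⟩ (show k + (j.1 - k) < M by omega)
      have hj2 : (⟨k + (j.1 - k), by omega⟩ : Fin M) = j :=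
        Fin.ext (by first | (simp; omega) | simp | omega)
      rwa [hj2] at e
    · intro hB i h
      have hmem : (⟨k + i.1, h⟩ : Fin M) ∈ univ.filter (fun j : Fin M => k ≤ j.1 ∧ j.1 < k + m) := by
        simp only [mem_filter, mem_univ, true_and]; exact ⟨by omega, by omega⟩
      have e := hB _ hmem
      rw [e, dif_pos (show k ≤ (⟨k + i.1, h⟩ : Fin M).1 ∧ (⟨k + i.1, h⟩ : Fin M).1 < k + m by
        first | (simp; omega) | simp | omega)]
      congr 1
      exact Fin.ext (by simp)
  rw [heq, card_agree, card_window k m hk]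

lemma count_pair {m M : ℕ} (T : Fin m → Bool) (k l : ℕ) (hkl : k + m ≤ l) (hl : l + m ≤ M) :
    (univ.filter (fun B : Fin M → Bool => occursAt T B k ∧ occursAt T B l)).card
      = 2 ^ (M - 2 * m) := by
  have hk : k + m ≤ M := by omega
  have heq : univ.filter (fun B : Fin M → Bool => occursAt T B k ∧ occursAt T B l)
      = univ.filter (fun B : Fin M → Bool =>
          ∀ j ∈ univ.filter (fun j : Fin M =>
              (k ≤ j.1 ∧ j.1 < k + m) ∨ (l ≤ j.1 ∧ j.1 < l + m)), B j =
            (if h : k ≤ j.1 ∧ j.1 < k + m then T ⟨j.1 - k, by omega⟩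
             else if h : l ≤ j.1 ∧ j.1 < l + m then T ⟨j.1 - l, by omega⟩ else false)) := by
    apply filter_congr
    intro B _
    constructor
    · rintro ⟨h1, h2⟩ j hj
      simp only [mem_filter, mem_univ, true_and] at hj
      rcases hj with hj | hj
      · rw [dif_pos hj]
        have e := h1 ⟨j.1 - k, by omega⟩ (show k + (j.1 - k) < M by omega)
        have hj2 : (⟨k + (j.1 - k), by omega⟩ : Fin M) = j :=
          Fin.ext (by first | (simp; omega) | simp | omega)
        rwa [hj2] at e
      · rw [dif_neg (by omega), dif_pos hj]
        have e := h2 ⟨j.1 - l, by omega⟩ (show l + (j.1 - l) < M by omega)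
        have hj2 : (⟨l + (j.1 - l), by omega⟩ : Fin M) = j :=
          Fin.ext (by first | (simp; omega) | simp | omega)
        rwa [hj2] at e
    · intro hB
      constructor
      · intro i h
        have hmem : (⟨k + i.1, h⟩ : Fin M) ∈ univ.filter (fun j : Fin M =>
              (k ≤ j.1 ∧ j.1 < k + m) ∨ (l ≤ j.1 ∧ j.1 < l + m)) := by
          simp only [mem_filter, mem_univ, true_and]
          exact Or.inl ⟨by omega, by omega⟩
        have e := hB _ hmem
        rw [e, dif_pos (show k ≤ (⟨k + i.1, h⟩ : Fin M).1 ∧ (⟨k + i.1, h⟩ : Fin M).1 < k + m by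
          first | (simp; omega) | simp | omega)]
        congr 1; exact Fin.ext (by simp)
      · intro i h
        have hmem : (⟨l + i.1, h⟩ : Fin M) ∈ univ.filter (fun j : Fin M =>
              (k ≤ j.1 ∧ j.1 < k + m) ∨ (l ≤ j.1 ∧ j.1 < l + m)) := by
          simp only [mem_filter, mem_univ, true_and]
          exact Or.inr ⟨by omega, by omega⟩
        have e := hB _ hmem
        have hi : i.1 < m := i.2
        rw [e, dif_neg (show ¬(k ≤ (⟨l + i.1, h⟩ : Fin M).1 ∧ (⟨l + i.1, h⟩ : Fin M).1 < k + m) by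
            first | (simp; omega) | simp | omega),
          dif_pos (show l ≤ (⟨l + i.1, h⟩ : Fin M).1 ∧ (⟨l + i.1, h⟩ : Fin M).1 < l + m by
            first | (simp; omega) | simp | omega)]
        congr 1; exact Fin.ext (by simp)
  rw [heq, card_agree]
  congr 1
  have : (univ.filter (fun j : Fin M =>
      (k ≤ j.1 ∧ j.1 < k + m) ∨ (l ≤ j.1 ∧ j.1 < l + m))).card = m + m := by
    rw [filter_or, card_union_of_disjoint, card_window k m hk, card_window l m hl]
    rw [disjoint_filter]
    intro x _ hx; omega
  omega

lemma count_overlap {m M : ℕ} (T : Fin m → Bool) (hT : NonSelfOverlapping T)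
    (k l : ℕ) (hkl : k < l) (hlt : l < k + m) (hl : l + m ≤ M) :
    (univ.filter (fun B : Fin M → Bool => occursAt T B k ∧ occursAt T B l)).card = 0 := by
  rw [card_eq_zero, filter_eq_empty_iff]
  rintro B - ⟨h1, h2⟩
  obtain ⟨i, hi, hne⟩ := hT (l - k) (by omega) (by omega)
  apply hne
  have e1 := h2 ⟨i, by omega⟩ (show l + i < M by omega)
  have e2 := h1 ⟨i + (l - k), by omega⟩ (show k + (i + (l - k)) < M by omega)
  have : (⟨l + i, by omega⟩ : Fin M) = ⟨k + (i + (l - k)), by omega⟩ :=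
    Fin.ext (by first | (simp; omega) | simp | omega)
  rw [this] at e1
  rw [e2] at e1
  exact e1.symm

lemma gauss (n : ℕ) : 2 * ∑ k ∈ Finset.range n, (n - k) = n * (n + 1) := by
  induction n with
  | zero => simp
  | succ n ih =>
    rw [Finset.sum_range_succ]
    have h : ∑ k ∈ Finset.range n, (n + 1 - k) = (∑ k ∈ Finset.range n, ((n - k) + 1)) := by
      apply Finset.sum_congr rfl
      intro x hx
      simp only [Finset.mem_range] at hx
      omega
    rw [h, Finset.sum_add_distrib, Finset.sum_const, Finset.card_range]
    simp only [smul_eq_mul, mul_one]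
    have e : (n + 1) * (n + 1 + 1) = n * (n + 1) + 2 * n + 2 := by ring
    rw [e]
    have h2 : n + 1 - n = 1 := by omega
    rw [h2]
    linarith [ih]

lemma card_range_filter_le (L c : ℕ) :
    ((Finset.range L).filter (fun l => c ≤ l)).card = L - c := by
  have h : (Finset.range L).filter (fun l => c ≤ l) = Finset.Ico c L := by
    ext x; simp [Finset.mem_Ico]; omega
  rw [h, Nat.card_Ico]

lemma sum_range_sub_eq (L n : ℕ) (h : n ≤ L) :
    ∑ k ∈ Finset.range L, (n - k) = ∑ k ∈ Finset.range n, (n - k) := by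
  symm
  apply Finset.sum_subset (Finset.range_subset_range.2 h)
  intro x hx hnx
  simp only [Finset.mem_range] at hx hnx
  omega

lemma sum_offdiag (L m a : ℕ) (hm : m ≤ L) :
    ∑ k ∈ range L, ∑ l ∈ range L, (if k + m ≤ l then a else 0)
      = (∑ k ∈ range (L - m), ((L - m) - k)) * a := by
  have h1 : ∀ k, ∑ l ∈ range L, (if k + m ≤ l then a else 0) = ((L - m) - k) * a := by
    intro k
    rw [← Finset.sum_filter, Finset.sum_const, card_range_filter_le, smul_eq_mul]
    congr 1
    omega
  rw [Finset.sum_congr rfl (fun k _ => h1 k), ← Finset.sum_mul]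
  congr 1
  exact sum_range_sub_eq L (L - m) (by omega)

end VarOcc

open Finset VarOcc in
theorem variance_occCount (m M : ℕ) (hm : 1 ≤ m) (T : Fin m → Bool)
    (hT : NonSelfOverlapping T) (hL : m ≤ M + 1 - m) :
    unifExp M (fun B => (occCount T B : ℝ) ^ 2)
        - (unifExp M (fun B => (occCount T B : ℝ))) ^ 2
      = ((M : ℝ) - m + 1) / 2 ^ m
        - ((2 * (m : ℝ) - 1) * ((M : ℝ) - m + 1) - m * (m - 1)) / 2 ^ (2 * m) := by
  set L := M + 1 - m with hLdef
  have hmM : 2 * m ≤ M + 1 := by omega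
  have hmM' : m ≤ M := by omega
  -- occCount as a sum of indicators
  have hocc : ∀ B : Fin M → Bool, occCount T B
      = ∑ k ∈ range L, if occursAt T B k then 1 else 0 := by
    intro B
    exact Finset.card_filter _ _
  -- first moment (ℕ)
  have step1 : ∑ B : Fin M → Bool, occCount T B = L * 2 ^ (M - m) := by
    calc ∑ B : Fin M → Bool, occCount T B
        = ∑ B : Fin M → Bool, ∑ k ∈ range L, (if occursAt T B k then 1 else 0) := by
          exact Finset.sum_congr rfl (fun B _ => hocc B)
      _ = ∑ k ∈ range L, ∑ B : Fin M → Bool, (if occursAt T B k then 1 else 0) :=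
          Finset.sum_comm
      _ = ∑ k ∈ range L, (univ.filter (fun B : Fin M → Bool => occursAt T B k)).card := by
          exact Finset.sum_congr rfl (fun k _ => (Finset.card_filter _ _).symm)
      _ = ∑ k ∈ range L, 2 ^ (M - m) := by
          apply Finset.sum_congr rfl
          intro k hk
          simp only [mem_range] at hk
          exact count_single T k (by omega)
      _ = L * 2 ^ (M - m) := by rw [Finset.sum_const, card_range, smul_eq_mul]
  -- second moment (ℕ)
  have step2 : ∑ B : Fin M → Bool, (occCount T B) ^ 2
      = L * 2 ^ (M - m) + (L - m) * ((L - m) + 1) * 2 ^ (M - 2 * m) := by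
    have hsq : ∀ B : Fin M → Bool, (occCount T B) ^ 2
        = ∑ k ∈ range L, ∑ l ∈ range L,
            (if occursAt T B k ∧ occursAt T B l then 1 else 0) := by
      intro B
      rw [hocc B, pow_two, Finset.sum_mul_sum]
      apply Finset.sum_congr rfl
      intro k _
      apply Finset.sum_congr rfl
      intro l _
      by_cases h1 : occursAt T B k <;> by_cases h2 : occursAt T B l <;> simp [h1, h2]
    have hswap : ∑ B : Fin M → Bool, (occCount T B) ^ 2
        = ∑ k ∈ range L, ∑ l ∈ range L,
            ((univ.filter (fun B : Fin M → Bool => occursAt T B k ∧ occursAt T B l)).card) := by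
      calc ∑ B : Fin M → Bool, (occCount T B) ^ 2
          = ∑ B : Fin M → Bool, ∑ k ∈ range L, ∑ l ∈ range L,
              (if occursAt T B k ∧ occursAt T B l then 1 else 0) :=
            Finset.sum_congr rfl (fun B _ => hsq B)
        _ = ∑ k ∈ range L, ∑ B : Fin M → Bool, ∑ l ∈ range L,
              (if occursAt T B k ∧ occursAt T B l then 1 else 0) := Finset.sum_comm
        _ = ∑ k ∈ range L, ∑ l ∈ range L, ∑ B : Fin M → Bool,
              (if occursAt T B k ∧ occursAt T B l then 1 else 0) :=
            Finset.sum_congr rfl (fun k _ => Finset.sum_comm)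
        _ = _ := by
            apply Finset.sum_congr rfl; intro k _
            apply Finset.sum_congr rfl; intro l _
            exact (Finset.card_filter _ _).symm
    have hn : ∀ k ∈ range L, ∀ l ∈ range L,
        ((univ.filter (fun B : Fin M → Bool => occursAt T B k ∧ occursAt T B l)).card)
          = (if k = l then 2 ^ (M - m) else 0)
            + (if k + m ≤ l then 2 ^ (M - 2 * m) else 0)
            + (if l + m ≤ k then 2 ^ (M - 2 * m) else 0) := by
      intro k hk l hl
      simp only [mem_range] at hk hl
      by_cases hkl : k = l
      · subst hkl
        have hne : ¬ (k + m ≤ k) := by omega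
        rw [if_pos rfl, if_neg hne]
        have he : univ.filter (fun B : Fin M → Bool => occursAt T B k ∧ occursAt T B k)
            = univ.filter (fun B : Fin M → Bool => occursAt T B k) :=
          filter_congr (fun B _ => and_self_iff)
        rw [he, count_single T k (by omega)]
        simp
      by_cases h1 : k + m ≤ l
      · rw [if_neg hkl, if_pos h1, if_neg (show ¬ (l + m ≤ k) by omega),
          count_pair T k l h1 (by omega)]
        simp
      by_cases h2 : l + m ≤ k
      · rw [if_neg hkl, if_neg h1, if_pos h2]
        have he : univ.filter (fun B : Fin M → Bool => occursAt T B k ∧ occursAt T B l)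
            = univ.filter (fun B : Fin M → Bool => occursAt T B l ∧ occursAt T B k) :=
          filter_congr (fun B _ => and_comm)
        rw [he, count_pair T l k h2 (by omega)]
        simp
      · rw [if_neg hkl, if_neg h1, if_neg h2]
        rcases Nat.lt_or_ge k l with h | h
        · rw [count_overlap T hT k l h (by omega) (by omega)]
        · have hlk : l < k := by omega
          have he : univ.filter (fun B : Fin M → Bool => occursAt T B k ∧ occursAt T B l)
              = univ.filter (fun B : Fin M → Bool => occursAt T B l ∧ occursAt T B k) :=
            filter_congr (fun B _ => and_comm)
          rw [he, count_overlap T hT l k hlk (by omega) (by omega)]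
    rw [hswap, Finset.sum_congr rfl (fun k hk => Finset.sum_congr rfl (fun l hl => hn k hk l hl))]
    have hsplit : ∑ k ∈ range L, ∑ l ∈ range L,
        ((if k = l then 2 ^ (M - m) else 0)
            + (if k + m ≤ l then 2 ^ (M - 2 * m) else 0)
            + (if l + m ≤ k then 2 ^ (M - 2 * m) else 0))
        = (∑ k ∈ range L, ∑ l ∈ range L, (if k = l then 2 ^ (M - m) else 0))
          + (∑ k ∈ range L, ∑ l ∈ range L, (if k + m ≤ l then 2 ^ (M - 2 * m) else 0))
          + (∑ k ∈ range L, ∑ l ∈ range L, (if l + m ≤ k then 2 ^ (M - 2 * m) else 0)) := by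
      rw [← Finset.sum_add_distrib, ← Finset.sum_add_distrib]
      apply Finset.sum_congr rfl
      intro k _
      rw [← Finset.sum_add_distrib, ← Finset.sum_add_distrib]
    rw [hsplit]
    have hA : ∑ k ∈ range L, ∑ l ∈ range L, (if k = l then 2 ^ (M - m) else 0)
        = L * 2 ^ (M - m) := by
      have : ∀ k ∈ range L, ∑ l ∈ range L, (if k = l then 2 ^ (M - m) else 0) = 2 ^ (M - m) := by
        intro k hk
        rw [Finset.sum_ite_eq]
        simp [hk]
      rw [Finset.sum_congr rfl this, Finset.sum_const, card_range, smul_eq_mul]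
    have hB : ∑ k ∈ range L, ∑ l ∈ range L, (if k + m ≤ l then 2 ^ (M - 2 * m) else 0)
        = (∑ k ∈ range (L - m), ((L - m) - k)) * 2 ^ (M - 2 * m) :=
      sum_offdiag L m _ hL
    have hC : ∑ k ∈ range L, ∑ l ∈ range L, (if l + m ≤ k then 2 ^ (M - 2 * m) else 0)
        = (∑ k ∈ range (L - m), ((L - m) - k)) * 2 ^ (M - 2 * m) := by
      rw [Finset.sum_comm]
      exact sum_offdiag L m _ hL
    rw [hA, hB, hC]
    have hg : 2 * ∑ k ∈ range (L - m), ((L - m) - k) = (L - m) * ((L - m) + 1) := gauss (L - m)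
    have : (∑ k ∈ range (L - m), ((L - m) - k)) * 2 ^ (M - 2 * m)
        + (∑ k ∈ range (L - m), ((L - m) - k)) * 2 ^ (M - 2 * m)
        = (L - m) * ((L - m) + 1) * 2 ^ (M - 2 * m) := by
      rw [← hg]; ring
    omega
  -- pass to the reals
  have hcast1 : ∑ B : Fin M → Bool, (occCount T B : ℝ) = ((L * 2 ^ (M - m) : ℕ) : ℝ) := by
    rw [← step1]; push_cast; ring
  have hcast2 : ∑ B : Fin M → Bool, (occCount T B : ℝ) ^ 2
      = ((L * 2 ^ (M - m) + (L - m) * ((L - m) + 1) * 2 ^ (M - 2 * m) : ℕ) : ℝ) := by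
    rw [← step2]; push_cast; ring
  have h2M : (2:ℝ) ^ M ≠ 0 := by positivity
  have h2m : (2:ℝ) ^ m ≠ 0 := by positivity
  have h22m : (2:ℝ) ^ (2*m) ≠ 0 := by positivity
  have hpow1 : (2:ℝ) ^ (M - m) * 2 ^ m = 2 ^ M := by
    rw [← pow_add]; congr 1; omega
  have e1 : ((L * 2 ^ (M - m) : ℕ) : ℝ) / 2 ^ M = (L : ℝ) / 2 ^ m := by
    push_cast
    rw [div_eq_div_iff h2M h2m, mul_assoc, hpow1]
  have e2 : (((L - m) * ((L - m) + 1) * 2 ^ (M - 2 * m) : ℕ) : ℝ) / 2 ^ M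
      = (((L - m) * ((L - m) + 1) : ℕ) : ℝ) / 2 ^ (2 * m) := by
    by_cases h2mM : 2 * m ≤ M
    · have hpow2 : (2:ℝ) ^ (M - 2 * m) * 2 ^ (2 * m) = 2 ^ M := by
        rw [← pow_add]; congr 1; omega
      push_cast
      rw [div_eq_div_iff h2M h22m, mul_assoc, hpow2]
    · have hq : L - m = 0 := by omega
      simp [hq]
  have hE2 : unifExp M (fun B => (occCount T B : ℝ) ^ 2)
      = (L : ℝ) / 2 ^ m + (((L - m) * ((L - m) + 1) : ℕ) : ℝ) / 2 ^ (2 * m) := by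
    rw [unifExp, hcast2, Nat.cast_add, add_div, e1, e2]
  have hE1 : unifExp M (fun B => (occCount T B : ℝ)) = (L : ℝ) / 2 ^ m := by
    rw [unifExp, hcast1, e1]
  rw [hE1, hE2]
  have hLr : (L : ℝ) = (M : ℝ) - m + 1 := by
    rw [hLdef]
    have : (↑(M + 1 - m) : ℝ) = ((M + 1 : ℕ) : ℝ) - m := by
      rw [Nat.cast_sub (by omega)]
    rw [this]; push_cast; ring
  have hQr : (((L - m) * ((L - m) + 1) : ℕ) : ℝ) = ((L:ℝ) - m) * ((L:ℝ) - m + 1) := by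
    push_cast [Nat.cast_sub hL]
    ring
  rw [hQr, hLr]
  have hp : ((2:ℝ) ^ m) ^ 2 = 2 ^ (2 * m) := by
    rw [← pow_mul, mul_comm]
  rw [div_pow, hp]
  have hmr : (1:ℝ) ≤ m := by exact_mod_cast hm
  field_simp
  ring
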